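/- Let p ≥ 3 be a prime, let i be an integer with 0 ≤ i ≤ p−1, and let j be any integer. Set D = ∏_{l=1}^{p} (j² − (i−2l+1)²) − ∏_{l=1}^{p} (j² − (i+2l−1)²). Then D ≡ 0 (mod p³) or D ≡ 4p² (mod p³). -/

import Mathlib

open Finset

section Aux
variable {p : ℕ}

private lemma tele (n : ℕ) (a b : ℕ → ℤ) :
    (∏ k ∈ range n, a k) - (∏ k ∈ range n, b k)
    = ∑ k ∈ range n, (∏ k' ∈ range k, a k') * (a k - b k) * (∏ k' ∈ Ico (k+1) n, b k') := by
  induction n with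
  | zero => simp
  | succ n ih =>
    rw [prod_range_succ, prod_range_succ, sum_range_succ]
    have h1 : ∀ k ∈ range n, (∏ k' ∈ range k, a k') * (a k - b k) * (∏ k' ∈ Ico (k+1) (n+1), b k')
        = ((∏ k' ∈ range k, a k') * (a k - b k) * (∏ k' ∈ Ico (k+1) n, b k')) * b n := by
      intro k hk
      rw [Finset.prod_Ico_succ_top (by simp at hk; omega)]
      ring
    rw [Finset.sum_congr rfl h1, ← Finset.sum_mul, ← ih]
    simp
    ring

private lemma prod_split_erase {M : Type*} [CommMonoid M] (f : ℕ → M) (k n : ℕ) (h : k < n) :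
    (∏ k' ∈ range k, f k') * (∏ k' ∈ Ico (k+1) n, f k') = ∏ k' ∈ (range n).erase k, f k' := by
  rw [← Finset.prod_union (by
    simp only [Finset.disjoint_left, mem_range, mem_Ico]
    intro a ha; omega)]
  apply Finset.prod_congr _ (fun _ _ => rfl)
  ext a
  simp only [mem_union, mem_range, mem_Ico, mem_erase]
  omega

private lemma prod_split_erase' {M : Type*} [CommMonoid M] (f : ℕ → M) (k m n : ℕ)
    (hk : k < m) (hmn : m ≤ n) :
    (∏ k' ∈ (range m).erase k, f k') * (∏ k' ∈ Ico m n, f k') = ∏ k' ∈ (range n).erase k, f k' := by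
  rw [← Finset.prod_union (by
    simp only [Finset.disjoint_left, mem_range, mem_Ico, mem_erase]
    intro a ha; omega)]
  apply Finset.prod_congr _ (fun _ _ => rfl)
  ext a
  simp only [mem_union, mem_range, mem_Ico, mem_erase]
  omega

variable [Fact p.Prime]

private lemma two_ne (hp3 : 3 ≤ p) : (2 : ZMod p) ≠ 0 := by
  intro h
  have h2' : ((2:ℕ) : ZMod p) = 0 := by exact_mod_cast h
  rw [ZMod.natCast_eq_zero_iff] at h2'
  have := Nat.le_of_dvd (by norm_num) h2'
  omega

private lemma exists_k (hp3 : 3 ≤ p) (x : ℤ) (z : ZMod p) :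
    ∃ k₀, k₀ < p ∧ ((x + 2*k₀ : ℤ) : ZMod p) = z ∧
      ∀ k < p, ((x + 2*k : ℤ) : ZMod p) = z → k = k₀ := by
  have h2 := two_ne hp3
  set w : ZMod p := (z - (x : ZMod p)) / 2 with hw
  refine ⟨w.val, w.val_lt, ?_, ?_⟩
  · push_cast
    rw [ZMod.natCast_val, ZMod.cast_id]
    have : (2:ZMod p) * ((z - (x:ZMod p))/2) = z - (x:ZMod p) := by
      rw [mul_comm]; exact div_mul_cancel₀ _ h2
    rw [hw]
    linear_combination this
  · intro k hk h0
    push_cast at h0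
    have hzz : (k : ZMod p) = w := by
      rw [hw, eq_div_iff h2]
      linear_combination h0
    have : ((k : ZMod p)).val = w.val := by rw [hzz]
    rwa [ZMod.val_natCast_of_lt hk] at this

private lemma prod_erase_zero : ∏ z ∈ (univ : Finset (ZMod p)).erase 0, z = -1 := by
  have h : (∏ u : (ZMod p)ˣ, u) = -1 := FiniteField.prod_univ_units_id_eq_neg_one
  have h3 : ∏ u : (ZMod p)ˣ, (u : ZMod p) = ∏ z ∈ (univ : Finset (ZMod p)).erase 0, z := by
    apply Finset.prod_bij (fun (u : (ZMod p)ˣ) _ => (u : ZMod p))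
    · intro u _; simp [Units.ne_zero]
    · intro a _ b _ hab; exact Units.ext hab
    · intro z hz
      simp only [mem_erase, mem_univ, and_true] at hz
      exact ⟨Units.mk0 z hz, mem_univ _, rfl⟩
    · intro u _; rfl
  rw [← h3]
  calc ∏ u : (ZMod p)ˣ, (u : ZMod p) = ((∏ u : (ZMod p)ˣ, u : (ZMod p)ˣ) : ZMod p) := by
        rw [← Units.coeHom_apply, map_prod]; rfl
    _ = -1 := by rw [h]; simp

private lemma prod_e_erase (hp3 : 3 ≤ p) (x : ℤ) (k₀ : ℕ) (hk0 : k₀ < p)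
    (h0 : ((x + 2*k₀ : ℤ) : ZMod p) = 0)
    (huniq : ∀ k < p, ((x + 2*k : ℤ) : ZMod p) = 0 → k = k₀) :
    ∏ k ∈ (range p).erase k₀, ((x : ZMod p) + 2*((k:ℕ) : ZMod p)) = -1 := by
  rw [← prod_erase_zero (p := p)]
  refine Finset.prod_bij (fun k _ => ((x : ZMod p) + 2*((k:ℕ) : ZMod p))) ?_ ?_ ?_ ?_
  · intro k hk
    simp only [mem_erase, mem_range] at hk
    simp only [mem_erase, mem_univ, and_true]
    intro hzero
    exact hk.1 (huniq k hk.2 (by push_cast; exact_mod_cast hzero))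
  · intro a ha b hb hab
    simp only [mem_erase, mem_range] at ha hb
    obtain ⟨w, hw1, hw2, hw3⟩ := exists_k hp3 x ((x : ZMod p) + 2*((a:ℕ) : ZMod p))
    rw [hw3 a ha.2 (by push_cast; ring)]
    exact (hw3 b hb.2 (by exact_mod_cast hab.symm)).symm
  · intro z hz
    simp only [mem_erase, mem_univ, and_true] at hz
    obtain ⟨w, hw1, hw2, hw3⟩ := exists_k hp3 x z
    refine ⟨w, ?_, by push_cast at hw2 ⊢; linear_combination hw2⟩
    simp only [mem_erase, mem_range]
    refine ⟨?_, hw1⟩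
    intro hwk
    apply hz
    rw [← hw2, hwk]
    exact_mod_cast h0
  · intro k _; rfl

end Aux

private def Gp (p : ℕ) (t : ℤ) : ℤ := ∏ k ∈ range p, (t + 2*(k:ℤ))
private def Sp (p : ℕ) (t : ℤ) : ℤ := ∑ k ∈ range p,
    (∏ k' ∈ range k, (t + 2*(k':ℤ))) * (∏ k' ∈ Ico (k+1) p, (t - 2*(p:ℤ) + 2*(k':ℤ)))

private lemma Gp_sub (p : ℕ) (t : ℤ) : Gp p t - Gp p (t - 2*p) = 2*p * Sp p t := by
  have h := tele p (fun k => t + 2*(k:ℤ)) (fun k => t - 2*(p:ℤ) + 2*(k:ℤ))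
  have h2 : Gp p (t - 2*p) = ∏ k ∈ range p, (t - 2*(p:ℤ) + 2*(k:ℤ)) := by
    unfold Gp; apply Finset.prod_congr rfl; intro k _; ring
  rw [Gp, h2, h, Sp, Finset.mul_sum]
  apply Finset.sum_congr rfl
  intro k _
  ring

private lemma Gp_mod {p : ℕ} [Fact p.Prime] (hp3 : 3 ≤ p) (t : ℤ) :
    ((Gp p t : ℤ) : ZMod p) = 0 := by
  obtain ⟨k₀, hlt, h0, -⟩ := exists_k hp3 t 0
  rw [Gp]
  push_cast
  apply Finset.prod_eq_zero (Finset.mem_range.mpr hlt)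
  push_cast at h0
  exact h0

private lemma Sp_mod {p : ℕ} [Fact p.Prime] (hp3 : 3 ≤ p) (t : ℤ) :
    ((Sp p t : ℤ) : ZMod p) = -1 := by
  obtain ⟨k₀, hlt, h0, huniq⟩ := exists_k hp3 t 0
  push_cast at h0
  rw [Sp]
  push_cast
  rw [Finset.sum_eq_single k₀]
  · have hfix : ∀ k' ∈ Ico (k₀+1) p,
        ((t:ZMod p) - 2*(p:ZMod p) + 2*((k':ℕ) : ZMod p)) = ((t:ZMod p) + 2*((k':ℕ) : ZMod p)) := by
      intro k' _
      rw [ZMod.natCast_self]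
      ring
    rw [Finset.prod_congr rfl hfix, prod_split_erase _ _ _ hlt]
    exact prod_e_erase hp3 t k₀ hlt (by push_cast; exact h0) huniq
  · intro k hk hne
    rw [Finset.mem_range] at hk
    rcases lt_or_gt_of_ne hne with hlt2 | hgt
    · -- k < k₀ : k₀ ∈ Ico (k+1) p, second product zero
      apply mul_eq_zero_of_right
      apply Finset.prod_eq_zero (Finset.mem_Ico.mpr ⟨by omega, hlt⟩)
      rw [ZMod.natCast_self]
      linear_combination h0
    · -- k₀ < k : k₀ ∈ range k, first product zero
      apply mul_eq_zero_of_left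
      apply Finset.prod_eq_zero (Finset.mem_range.mpr hgt)
      exact h0
  · intro h
    exact absurd (Finset.mem_range.mpr hlt) h

/-- For `p ≥ 3` prime, `0 ≤ i ≤ p−1` and any integer `j`, the difference
`D = ∏_{l=1}^p (j² − (i−2l+1)²) − ∏_{l=1}^p (j² − (i+2l−1)²)` satisfies
`D ≡ 0 (mod p³)` or `D ≡ 4p² (mod p³)`. -/
theorem stmt2 (p : ℕ) (hp : p.Prime) (hp3 : 3 ≤ p) (i j : ℤ)
    (hi0 : 0 ≤ i) (hi1 : i ≤ (p : ℤ) - 1)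
    (D : ℤ)
    (hD : D = (∏ l ∈ Finset.Icc 1 p, (j ^ 2 - (i - 2 * (l : ℤ) + 1) ^ 2)) -
              (∏ l ∈ Finset.Icc 1 p, (j ^ 2 - (i + 2 * (l : ℤ) - 1) ^ 2))) :
    D ≡ 0 [ZMOD ((p : ℤ) ^ 3)] ∨ D ≡ 4 * (p : ℤ) ^ 2 [ZMOD ((p : ℤ) ^ 3)] := by
  haveI : Fact p.Prime := ⟨hp⟩
  have hp0 : (p : ℤ) ≠ 0 := by positivity
  set m : ℕ := i.toNat with hm
  have him : (m : ℤ) = i := Int.toNat_of_nonneg hi0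
  have hmp : m < p := by omega
  set x : ℤ := j - i + 1 with hx
  set y : ℤ := j + i + 1 with hy
  -- Step 1 : factor D
  have e1 : (∏ l ∈ Finset.Icc 1 p, (j ^ 2 - (i - 2 * (l : ℤ) + 1) ^ 2))
      = (∏ l ∈ Finset.Icc 1 p, (j - i + 2*(l:ℤ) - 1)) * (∏ l ∈ Finset.Icc 1 p, (j + i - 2*(l:ℤ) + 1)) := by
    rw [← Finset.prod_mul_distrib]
    apply Finset.prod_congr rfl; intro l _; ring
  have e2 : (∏ l ∈ Finset.Icc 1 p, (j ^ 2 - (i + 2 * (l : ℤ) - 1) ^ 2))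
      = (∏ l ∈ Finset.Icc 1 p, (j - i - 2*(l:ℤ) + 1)) * (∏ l ∈ Finset.Icc 1 p, (j + i + 2*(l:ℤ) - 1)) := by
    rw [← Finset.prod_mul_distrib]
    apply Finset.prod_congr rfl; intro l _; ring
  have c1 : (∏ l ∈ Finset.Icc 1 p, (j - i + 2*(l:ℤ) - 1)) = Gp p x := by
    rw [← Finset.Ico_add_one_right_eq_Icc, Finset.prod_Ico_eq_prod_range]
    simp only [Nat.add_sub_cancel, Gp]
    apply Finset.prod_congr rfl; intro k _; push_cast; ring
  have c4 : (∏ l ∈ Finset.Icc 1 p, (j + i + 2*(l:ℤ) - 1)) = Gp p y := by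
    rw [← Finset.Ico_add_one_right_eq_Icc, Finset.prod_Ico_eq_prod_range]
    simp only [Nat.add_sub_cancel, Gp]
    apply Finset.prod_congr rfl; intro k _; push_cast; ring
  have c2 : (∏ l ∈ Finset.Icc 1 p, (j + i - 2*(l:ℤ) + 1)) = Gp p (y - 2*p) := by
    rw [← Finset.Ico_add_one_right_eq_Icc, Finset.prod_Ico_eq_prod_range]
    simp only [Nat.add_sub_cancel, Gp]
    rw [← Finset.prod_range_reflect]
    apply Finset.prod_congr rfl; intro k hk
    simp only [Finset.mem_range] at hk
    have hc : ((1 + (p - 1 - k) : ℕ) : ℤ) = (p:ℤ) - (k:ℤ) := by omega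
    rw [hc, hy]; push_cast; ring
  have c3 : (∏ l ∈ Finset.Icc 1 p, (j - i - 2*(l:ℤ) + 1)) = Gp p (x - 2*p) := by
    rw [← Finset.Ico_add_one_right_eq_Icc, Finset.prod_Ico_eq_prod_range]
    simp only [Nat.add_sub_cancel, Gp]
    rw [← Finset.prod_range_reflect]
    apply Finset.prod_congr rfl; intro k hk
    simp only [Finset.mem_range] at hk
    have hc : ((1 + (p - 1 - k) : ℕ) : ℤ) = (p:ℤ) - (k:ℤ) := by omega
    rw [hc, hx]; push_cast; ring
  have hD1 : D = Gp p x * Gp p (y - 2*p) - Gp p (x - 2*p) * Gp p y := by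
    rw [hD, e1, e2, c1, c2, c3, c4]
  -- Step 2 : extract p from G x, G y
  obtain ⟨gx, hgx⟩ : (p:ℤ) ∣ Gp p x := by
    rw [← ZMod.intCast_zmod_eq_zero_iff_dvd]
    exact Gp_mod hp3 x
  obtain ⟨gy, hgy⟩ : (p:ℤ) ∣ Gp p y := by
    rw [← ZMod.intCast_zmod_eq_zero_iff_dvd]
    exact Gp_mod hp3 y
  -- Step 3 : D = 2 p^2 E
  set E : ℤ := Sp p x * gy - gx * Sp p y with hE
  have hDE : D = 2*(p:ℤ)^2 * E := by
    have h1 := Gp_sub p x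
    have h2 := Gp_sub p y
    rw [hE]
    linear_combination hD1 - Gp p x * h2 + Gp p y * h1 - 2*(p:ℤ)*(Sp p y)*hgx + 2*(p:ℤ)*(Sp p x)*hgy
  -- Step 4 : G x - G y = -2p C T
  set C : ℤ := ∏ k ∈ Ico m p, (x + 2*(k:ℤ)) with hC
  set A : ℤ := ∏ k ∈ range m, (x + 2*(k:ℤ)) with hA
  set B : ℤ := ∏ k ∈ range m, (x + 2*(p:ℤ) + 2*(k:ℤ)) with hB
  set T : ℤ := ∑ k ∈ range m,
      (∏ k' ∈ range k, (x + 2*(k':ℤ))) * (∏ k' ∈ Ico (k+1) m, (x + 2*(p:ℤ) + 2*(k':ℤ))) with hT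
  have hAC : Gp p x = A * C := by
    rw [hA, hC, Gp, Finset.prod_range_mul_prod_Ico _ (le_of_lt hmp)]
  have hCB : Gp p y = C * B := by
    have hyx : ∀ k : ℕ, y + 2*(k:ℤ) = x + 2*((m + k : ℕ) : ℤ) := by
      intro k; push_cast; rw [him]; ring
    calc Gp p y = ∏ k ∈ range p, (x + 2*((m + k : ℕ) : ℤ)) := by
          rw [Gp]; exact Finset.prod_congr rfl (fun k _ => hyx k)
      _ = ∏ k ∈ Ico m (m + p), (x + 2*(k:ℤ)) := by
          rw [Finset.prod_Ico_eq_prod_range]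
          simp only [Nat.add_sub_cancel_left]
      _ = C * B := by
          rw [← Finset.prod_Ico_consecutive _ (le_of_lt hmp) (by omega : p ≤ m + p), hC, hB]
          congr 1
          rw [Finset.prod_Ico_eq_prod_range]
          simp only [Nat.add_sub_cancel]
          apply Finset.prod_congr rfl; intro k _; push_cast; ring
  have hABT : A - B = -(2*(p:ℤ)) * T := by
    have h := tele m (fun k => x + 2*(k:ℤ)) (fun k => x + 2*(p:ℤ) + 2*(k:ℤ))
    rw [hA, hB, hT, h, Finset.mul_sum]
    apply Finset.sum_congr rfl; intro k _; ring
  have hgxy : gx - gy = -2 * (C * T) := by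
    apply mul_left_cancel₀ hp0
    have : Gp p x - Gp p y = C * (A - B) := by rw [hAC, hCB]; ring
    rw [hABT] at this
    linear_combination this - hgx + hgy
  -- Step 5 : E mod p
  have hEmod : ((E : ℤ) : ZMod p) = -2 * (((C:ℤ) : ZMod p) * ((T:ℤ) : ZMod p)) := by
    have hsx := Sp_mod hp3 x
    have hsy := Sp_mod hp3 y
    have hcast : ((gx - gy : ℤ) : ZMod p) = ((-2 * (C * T) : ℤ) : ZMod p) := by rw [hgxy]
    push_cast at hcast ⊢
    rw [hE]
    push_cast
    rw [hsx, hsy]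
    linear_combination hcast
  -- Step 6 : case analysis
  obtain ⟨k₀, hk₀p, h0, huniq⟩ := exists_k hp3 x 0
  by_cases hcase : m ≤ k₀
  · -- C ≡ 0, D ≡ 0
    left
    have hC0 : ((C:ℤ) : ZMod p) = 0 := by
      rw [hC]
      push_cast
      apply Finset.prod_eq_zero (Finset.mem_Ico.mpr ⟨hcase, hk₀p⟩)
      push_cast at h0
      exact h0
    have hpE : (p:ℤ) ∣ E := by
      rw [← ZMod.intCast_zmod_eq_zero_iff_dvd, hEmod, hC0]
      ring
    obtain ⟨e, he⟩ := hpE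
    have : D = (p:ℤ)^3 * (2*e) := by rw [hDE, he]; ring
    rw [Int.ModEq]
    simp [this, Int.mul_emod_right]
  · -- C*T ≡ -1, D ≡ 4p²
    right
    push_neg at hcase
    have hT1 : ((T:ℤ) : ZMod p) = ∏ k ∈ (range m).erase k₀, ((x : ZMod p) + 2*((k:ℕ) : ZMod p)) := by
      rw [hT]
      push_cast
      push_cast at h0
      rw [Finset.sum_eq_single k₀]
      · have hfix : ∀ k' ∈ Ico (k₀+1) m,
            ((x:ZMod p) + 2*(p:ZMod p) + 2*((k':ℕ) : ZMod p)) = ((x:ZMod p) + 2*((k':ℕ) : ZMod p)) := by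
          intro k' _
          rw [ZMod.natCast_self]
          ring
        rw [Finset.prod_congr rfl hfix, prod_split_erase _ _ _ hcase]
      · intro k hk hne
        rw [Finset.mem_range] at hk
        rcases lt_or_gt_of_ne hne with hlt2 | hgt
        · apply mul_eq_zero_of_right
          apply Finset.prod_eq_zero (Finset.mem_Ico.mpr ⟨by omega, hcase⟩)
          rw [ZMod.natCast_self]
          linear_combination h0
        · apply mul_eq_zero_of_left
          apply Finset.prod_eq_zero (Finset.mem_range.mpr hgt)
          exact h0
      · intro h
        exact absurd (Finset.mem_range.mpr hcase) h
    have hCT : ((C:ℤ) : ZMod p) * ((T:ℤ) : ZMod p) = -1 := by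
      rw [hT1, hC]
      push_cast
      rw [mul_comm, prod_split_erase' _ _ _ _ hcase (le_of_lt hmp)]
      exact prod_e_erase hp3 x k₀ hk₀p h0 huniq
    have hE2 : ((E - 2 : ℤ) : ZMod p) = 0 := by
      push_cast
      rw [hEmod, hCT]
      ring
    rw [ZMod.intCast_zmod_eq_zero_iff_dvd] at hE2
    obtain ⟨e, he⟩ := hE2
    have hDfin : D - 4*(p:ℤ)^2 = (p:ℤ)^3 * (2*e) := by
      have hEe : E = 2 + (p:ℤ)*e := by linarith
      rw [hDE, hEe]; ring
    exact Int.ModEq.symm (Int.modEq_iff_dvd.mpr ⟨2*e, hDfin⟩)
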